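/- arXiv:2003.05169 — 2 statements merged into one kernel-verified Lean document; each statement's English description precedes it below -/
import Mathlib

section
/- Let Ĝ* minimise G ↦ H(Σ, Σ̂_G) and Ĝ_CV minimise G ↦ H(S_val, Σ̂_G) over a finite family M of graphs. Then the regret satisfies 0 ≤ H(Σ, Σ̂_{Ĝ_CV}) − H(Σ, Σ̂_{Ĝ*}) ≤ (1/2)⟨Σ − S_val, K̂_{Ĝ_CV} − K̂_{Ĝ*}⟩. -/
open MeasureTheory Matrix Real ProbabilityTheory

noncomputable def gaussDensity {p : ℕ} (S : Matrix (Fin p) (Fin p) ℝ) (x : Fin p → ℝ) : ℝ :=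
  (2 * Real.pi) ^ (-(p : ℝ) / 2) * Real.sqrt (S⁻¹).det * Real.exp (-(x ⬝ᵥ (S⁻¹ *ᵥ x)) / 2)

noncomputable def gaussMeasure {p : ℕ} (S : Matrix (Fin p) (Fin p) ℝ) : Measure (Fin p → ℝ) :=
  MeasureTheory.volume.withDensity fun x => ENNReal.ofReal (gaussDensity S x)

noncomputable def CE {p : ℕ} (A B : Matrix (Fin p) (Fin p) ℝ) : ℝ :=
  (1/2) * ((A * B⁻¹).trace - Real.log (B⁻¹).det)

def minner {p : ℕ} (A B : Matrix (Fin p) (Fin p) ℝ) : ℝ := (Bᵀ * A).trace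

noncomputable def frob {p : ℕ} (A : Matrix (Fin p) (Fin p) ℝ) : ℝ :=
  Real.sqrt (∑ i, ∑ j, (A i j)^2)

noncomputable def specNorm {p : ℕ} (A : Matrix (Fin p) (Fin p) ℝ) : ℝ :=
  ‖LinearMap.toContinuousLinearMap (Matrix.toEuclideanLin A)‖
/-- Basic regret control: if Ĝ* minimises the true CE and Ĝ_CV the validated CE
    over a finite family, then
    0 ≤ H(Σ,Σ̂_{Ĝ_CV}) − H(Σ,Σ̂_{Ĝ*}) ≤ (1/2)⟨Σ − S_val, K̂_{Ĝ_CV} − K̂_{Ĝ*}⟩. -/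
theorem stmt5 {p : ℕ} {ι : Type*} [Fintype ι] [Nonempty ι]
    (Sig Sval : Matrix (Fin p) (Fin p) ℝ) (hSig : Sig.PosDef) (hSval : Sval.PosDef)
    (Shat : ι → Matrix (Fin p) (Fin p) ℝ) (hPD : ∀ G, (Shat G).PosDef)
    (Gstar GCV : ι)
    (hGstar : ∀ G, CE Sig (Shat Gstar) ≤ CE Sig (Shat G))
    (hGCV : ∀ G, CE Sval (Shat GCV) ≤ CE Sval (Shat G)) :
    0 ≤ CE Sig (Shat GCV) - CE Sig (Shat Gstar) ∧
    CE Sig (Shat GCV) - CE Sig (Shat Gstar) ≤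
      (1/2) * minner (Sig - Sval) ((Shat GCV)⁻¹ - (Shat Gstar)⁻¹) := by
  have hsym : ∀ G : ι, ((Shat G)⁻¹)ᵀ = (Shat G)⁻¹ := fun G => by
    have h := (hPD G).isHermitian.inv
    simpa [Matrix.IsHermitian, Matrix.conjTranspose_eq_transpose_of_trivial] using h
  have key : ∀ B : Matrix (Fin p) (Fin p) ℝ,
      CE Sig B - CE Sval B = (1/2) * ((Sig - Sval) * B⁻¹).trace := by
    intro B
    simp only [CE, Matrix.sub_mul, Matrix.trace_sub]
    ring
  have hmin : minner (Sig - Sval) ((Shat GCV)⁻¹ - (Shat Gstar)⁻¹) =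
      ((Sig - Sval) * (Shat GCV)⁻¹).trace - ((Sig - Sval) * (Shat Gstar)⁻¹).trace := by
    rw [minner, Matrix.transpose_sub, hsym, hsym, Matrix.sub_mul, Matrix.trace_sub,
      Matrix.trace_mul_comm, Matrix.trace_mul_comm ((Shat Gstar)⁻¹)]
  refine ⟨by linarith [hGstar GCV], ?_⟩
  have h1 := key (Shat GCV)
  have h2 := key (Shat Gstar)
  have h3 := hGCV Gstar
  rw [hmin]
  linarith
end

section
/- Let P := ℙ(|H(Σ,Σ̂_{Ĝ_CV}) − H(Σ,Σ̂_{Ĝ*})| ≤ δ) and W := Σ^{-1/2} S_val Σ^{-1/2}. Then P ≥ ℙ(‖W − I_p‖_F ≤ δ / max_{G∈M} ‖Σ^{1/2} K̂_G Σ^{1/2}‖_F). -/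
open MeasureTheory Matrix Real ProbabilityTheory

/-- The square root of a positive semidefinite matrix, as `Matrix.PosSemidef.sqrt` was defined in
Mathlib (Dec 2024); that definition has since been removed. -/
noncomputable def Matrix.PosSemidef.sqrt {n : Type*} [Fintype n] [DecidableEq n]
    {A : Matrix n n ℝ} (hA : A.PosSemidef) : Matrix n n ℝ :=
  hA.1.eigenvectorUnitary.1 * diagonal ((↑) ∘ (√·) ∘ hA.1.eigenvalues) *
    (star hA.1.eigenvectorUnitary : Matrix n n ℝ)

instance matMeasurableSpace {p : ℕ} : MeasurableSpace (Matrix (Fin p) (Fin p) ℝ) :=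
  (inferInstance : MeasurableSpace (Fin p → Fin p → ℝ))

lemma Matrix.PosSemidef.sqrt_mul_self {n : Type*} [Fintype n] [DecidableEq n]
    {A : Matrix n n ℝ} (hA : A.PosSemidef) : hA.sqrt * hA.sqrt = A := by
  unfold Matrix.PosSemidef.sqrt
  have hU : (star hA.1.eigenvectorUnitary : Matrix n n ℝ) * hA.1.eigenvectorUnitary.1 = 1 :=
    Unitary.coe_star_mul_self _
  conv_rhs => rw [hA.1.spectral_theorem, Unitary.conjStarAlgAut_apply]
  rw [show ∀ a b c d e f : Matrix n n ℝ, a * b * c * (d * e * f) = a * (b * (c * d) * e) * f from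
    fun a b c d e f => by simp only [Matrix.mul_assoc], hU, Matrix.mul_one, diagonal_mul_diagonal]
  congr 3
  funext i
  simp [Real.mul_self_sqrt (hA.eigenvalues_nonneg i)]

lemma frob_nonneg {p : ℕ} (A : Matrix (Fin p) (Fin p) ℝ) : 0 ≤ frob A := Real.sqrt_nonneg _

lemma abs_trace_mul_le {p : ℕ} (A B : Matrix (Fin p) (Fin p) ℝ) :
    |(A * B).trace| ≤ frob A * frob B := by
  have htr : (A * B).trace = ∑ x : Fin p × Fin p, A x.1 x.2 * B x.2 x.1 := by
    rw [Fintype.sum_prod_type]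
    simp [Matrix.trace, Matrix.diag, Matrix.mul_apply]
  have hcs := Finset.sum_mul_sq_le_sq_mul_sq Finset.univ
    (fun x : Fin p × Fin p => A x.1 x.2) (fun x => B x.2 x.1)
  have hA : (∑ x : Fin p × Fin p, (A x.1 x.2) ^ 2) = ∑ i, ∑ j, (A i j) ^ 2 :=
    Fintype.sum_prod_type _
  have hB : (∑ x : Fin p × Fin p, (B x.2 x.1) ^ 2) = ∑ i, ∑ j, (B i j) ^ 2 := by
    rw [Fintype.sum_prod_type]; exact Finset.sum_comm
  calc |(A*B).trace| = Real.sqrt ((A*B).trace ^ 2) := (Real.sqrt_sq_eq_abs _).symm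
    _ ≤ Real.sqrt ((∑ i, ∑ j, (A i j)^2) * (∑ i, ∑ j, (B i j)^2)) := by
        apply Real.sqrt_le_sqrt; rw [htr, ← hA, ← hB]; exact hcs
    _ = frob A * frob B := Real.sqrt_mul (by positivity) _

lemma CE_sub {p : ℕ} (A A' B : Matrix (Fin p) (Fin p) ℝ) :
    CE A B - CE A' B = (1/2) * ((A - A') * B⁻¹).trace := by
  unfold CE
  rw [Matrix.sub_mul, Matrix.trace_sub]
  ring

/-- Concentration bound: P(|regret| ≤ δ) ≥ P(‖W − I‖_F ≤ δ / max_G ‖Σ^{1/2}K̂_GΣ^{1/2}‖_F)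
    where W = Σ^{-1/2} S_val Σ^{-1/2}. -/
theorem stmt13 {p : ℕ} {ι : Type*} [Fintype ι] [Nonempty ι]
    {Ω : Type*} [MeasureSpace Ω] [IsProbabilityMeasure (ℙ : Measure Ω)]
    (Sig : Matrix (Fin p) (Fin p) ℝ) (hSig : Sig.PosDef) (δ : ℝ) (hδ : 0 < δ)
    (Sval Sexpl : Ω → Matrix (Fin p) (Fin p) ℝ)
    (hmSval : Measurable Sval) (hmSexpl : Measurable Sexpl)
    (Shat : ι → Matrix (Fin p) (Fin p) ℝ → Matrix (Fin p) (Fin p) ℝ)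
    (hPD : ∀ G s, (Shat G s).PosDef)
    (Gstar : Matrix (Fin p) (Fin p) ℝ → ι)
    (hGstar : ∀ s G, CE Sig (Shat (Gstar s) s) ≤ CE Sig (Shat G s))
    (GCV : Ω → ι)
    (hGCV : ∀ ω G, CE (Sval ω) (Shat (GCV ω) (Sexpl ω)) ≤ CE (Sval ω) (Shat G (Sexpl ω))) :
    ℙ {ω | |CE Sig (Shat (GCV ω) (Sexpl ω))
            - CE Sig (Shat (Gstar (Sexpl ω)) (Sexpl ω))| ≤ δ} ≥
    ℙ {ω | frob ((hSig.posSemidef.sqrt)⁻¹ * Sval ω * (hSig.posSemidef.sqrt)⁻¹ - 1) ≤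
        δ / ⨆ G : ι, frob (hSig.posSemidef.sqrt * (Shat G (Sexpl ω))⁻¹
            * hSig.posSemidef.sqrt)} := by
  apply measure_mono
  intro ω hω
  simp only [Set.mem_setOf_eq] at hω ⊢
  set R := hSig.posSemidef.sqrt with hRdef
  set s := Sexpl ω
  set V := Sval ω
  set W := R⁻¹ * V * R⁻¹ - 1 with hWdef
  -- basic facts about R
  have hRR : R * R = Sig := hSig.posSemidef.sqrt_mul_self
  have hdetR : R.det ≠ 0 := by
    intro h
    have : Sig.det = 0 := by rw [← hRR, Matrix.det_mul, h, mul_zero]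
    exact (ne_of_gt hSig.det_pos) this
  have hRinv : R * R⁻¹ = 1 := Matrix.mul_nonsing_inv _ (isUnit_iff_ne_zero.2 hdetR)
  have hinvR : R⁻¹ * R = 1 := Matrix.nonsing_inv_mul _ (isUnit_iff_ne_zero.2 hdetR)
  have h1 : R * (R⁻¹ * V * R⁻¹) * R = V := by
    calc R * (R⁻¹ * V * R⁻¹) * R = (R * R⁻¹) * V * (R⁻¹ * R) := by
          simp only [Matrix.mul_assoc]
      _ = V := by rw [hRinv, hinvR, Matrix.one_mul, Matrix.mul_one]
  have hkey : R * W * R = V - Sig := by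
    rw [hWdef, Matrix.mul_sub, Matrix.sub_mul, Matrix.mul_one, hRR, h1]
  -- the per-G bound
  have hbound : ∀ K : Matrix (Fin p) (Fin p) ℝ,
      |((V - Sig) * K).trace| ≤ frob W * frob (R * K * R) := by
    intro K
    have : ((V - Sig) * K).trace = (W * (R * K * R)).trace := by
      rw [← hkey,
        show R * W * R * K = R * (W * (R * K)) by simp only [Matrix.mul_assoc],
        Matrix.trace_mul_comm,
        show W * (R * K) * R = W * (R * K * R) by simp only [Matrix.mul_assoc]]
    rw [this]
    exact abs_trace_mul_le _ _
  set m : ι → ℝ := fun G => frob (R * (Shat G s)⁻¹ * R) with hmdef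
  set S : ℝ := ⨆ G : ι, m G with hSdef
  have hmle : ∀ G, m G ≤ S :=
    fun G => le_ciSup (Set.Finite.bddAbove (Set.finite_range m)) G
  have hS0 : 0 ≤ S := le_trans (frob_nonneg _) (hmle (Classical.arbitrary ι))
  have hF0 : 0 ≤ frob W := frob_nonneg _
  -- regret bound
  set r := CE Sig (Shat (GCV ω) s) - CE Sig (Shat (Gstar s) s) with hrdef
  have hr0 : 0 ≤ r := sub_nonneg.2 (hGstar s (GCV ω))
  have e1 := CE_sub Sig V (Shat (GCV ω) s)
  have e2 := CE_sub V Sig (Shat (Gstar s) s)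
  have b1 : ((Sig - V) * (Shat (GCV ω) s)⁻¹).trace ≤ frob W * S := by
    have h := hbound ((Shat (GCV ω) s)⁻¹)
    have hneg : ((Sig - V) * (Shat (GCV ω) s)⁻¹).trace
        = -(((V - Sig) * (Shat (GCV ω) s)⁻¹).trace) := by
      rw [show Sig - V = -(V - Sig) from (neg_sub V Sig).symm, Matrix.neg_mul, Matrix.trace_neg]
    rw [hneg]
    calc -(((V - Sig) * (Shat (GCV ω) s)⁻¹).trace)
        ≤ |((V - Sig) * (Shat (GCV ω) s)⁻¹).trace| := neg_le_abs _
      _ ≤ frob W * m (GCV ω) := h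
      _ ≤ frob W * S := mul_le_mul_of_nonneg_left (hmle _) hF0
  have b2 : ((V - Sig) * (Shat (Gstar s) s)⁻¹).trace ≤ frob W * S := by
    calc ((V - Sig) * (Shat (Gstar s) s)⁻¹).trace
        ≤ |((V - Sig) * (Shat (Gstar s) s)⁻¹).trace| := le_abs_self _
      _ ≤ frob W * m (Gstar s) := hbound _
      _ ≤ frob W * S := mul_le_mul_of_nonneg_left (hmle _) hF0
  have hmid : CE V (Shat (GCV ω) s) - CE V (Shat (Gstar s) s) ≤ 0 :=
    sub_nonpos.2 (hGCV ω (Gstar s))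
  have hrle : r ≤ frob W * S := by
    have : r = (CE Sig (Shat (GCV ω) s) - CE V (Shat (GCV ω) s))
        + (CE V (Shat (GCV ω) s) - CE V (Shat (Gstar s) s))
        + (CE V (Shat (Gstar s) s) - CE Sig (Shat (Gstar s) s)) := by ring
    rw [this, e1, e2]
    linarith [b1, b2, hmid]
  have hrδ : r ≤ δ := by
    rcases eq_or_lt_of_le hS0 with hS | hS
    · have h0 : frob W * S = 0 := by rw [← hS, mul_zero]
      linarith
    · have hFS : frob W * S ≤ δ := (le_div_iff₀ hS).1 hω
      linarith
  rw [abs_of_nonneg hr0]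
  exact hrδ
end
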